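/- arXiv:0706.4138 — 5 statements merged into one kernel-verified Lean document; each statement's English description precedes it below -/
import Mathlib

section
/- For any real m×n matrix X and any symmetric matrices W₁ ∈ ℝ^{m×m}, W₂ ∈ ℝ^{n×n} such that the block matrix [[W₁, X], [X', W₂]] is positive semidefinite, one has ‖X‖_* ≤ (Tr(W₁) + Tr(W₂))/2. Moreover, for every X ∈ ℝ^{m×n} there exist symmetric W₁ ∈ ℝ^{m×m} and W₂ ∈ ℝ^{n×n} with [[W₁, X], [X', W₂]] positive semidefinite and (Tr(W₁) + Tr(W₂))/2 = ‖X‖_*. -/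
open Matrix

/-- The nuclear norm (sum of singular values) of a real matrix, as the trace of √(XᵀX). -/
noncomputable def nucNorm {m n : Type*} [Fintype m] [Fintype n] [DecidableEq n]
    (X : Matrix m n ℝ) : ℝ :=
  (((Matrix.posSemidef_conjTranspose_mul_self X).1.eigenvectorUnitary : Matrix n n ℝ) *
    diagonal ((RCLike.ofReal : ℝ → ℝ) ∘ Real.sqrt ∘
      (Matrix.posSemidef_conjTranspose_mul_self X).1.eigenvalues) *
    (star (Matrix.posSemidef_conjTranspose_mul_self X).1.eigenvectorUnitary : Matrix n n ℝ)).trace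

lemma aux_trace_nonneg {k : Type*} [Fintype k] [DecidableEq k] {M : Matrix k k ℝ}
    (hM : M.PosSemidef) : 0 ≤ M.trace := by
  rw [Matrix.trace]
  refine Finset.sum_nonneg fun i _ => ?_
  exact hM.diag_nonneg

lemma aux_col_zero {k l : Type*} [Fintype k] (A : Matrix k l ℝ) (i : l)
    (h : (Aᴴ * A) i i = 0) (j : k) : A j i = 0 := by
  have h' : ∑ j, A j i * A j i = 0 := by
    simpa [Matrix.mul_apply, Matrix.conjTranspose_apply] using h
  exact mul_self_eq_zero.mp <|
    (Finset.sum_eq_zero_iff_of_nonneg fun j _ => mul_self_nonneg (A j i)).mp h' j (Finset.mem_univ j)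

/-- SDP characterization of the nuclear norm: whenever [[W₁, X], [Xᵀ, W₂]] ⪰ 0 with W₁, W₂
symmetric, one has ‖X‖₊ ≤ (Tr W₁ + Tr W₂)/2, and this bound is attained for suitable W₁, W₂. -/
theorem nucNorm_sdp_characterization (m n : ℕ) (X : Matrix (Fin m) (Fin n) ℝ) :
    (∀ (W₁ : Matrix (Fin m) (Fin m) ℝ) (W₂ : Matrix (Fin n) (Fin n) ℝ),
      W₁.IsSymm → W₂.IsSymm → (Matrix.fromBlocks W₁ X Xᵀ W₂).PosSemidef →
      nucNorm X ≤ (W₁.trace + W₂.trace) / 2) ∧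
    (∃ (W₁ : Matrix (Fin m) (Fin m) ℝ) (W₂ : Matrix (Fin n) (Fin n) ℝ),
      W₁.IsSymm ∧ W₂.IsSymm ∧ (Matrix.fromBlocks W₁ X Xᵀ W₂).PosSemidef ∧
      (W₁.trace + W₂.trace) / 2 = nucNorm X) := by
  have hB : (Xᴴ * X).PosSemidef := Matrix.posSemidef_conjTranspose_mul_self X
  set V : Matrix (Fin n) (Fin n) ℝ := (hB.1.eigenvectorUnitary : Matrix (Fin n) (Fin n) ℝ) with hV
  set ev : Fin n → ℝ := hB.1.eigenvalues with hev
  have hev0 : ∀ i, 0 ≤ ev i := fun i => hB.eigenvalues_nonneg i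
  have hVV : Vᴴ * V = 1 := by
    rw [← Matrix.star_eq_conjTranspose]
    exact Unitary.coe_star_mul_self _
  have hVV' : V * Vᴴ = 1 := by
    rw [← Matrix.star_eq_conjTranspose]
    exact Unitary.coe_mul_star_self _
  have hcoe : (RCLike.ofReal ∘ ev : Fin n → ℝ) = ev := by funext i; simp
  have hspec : Xᴴ * X = V * diagonal ev * Vᴴ := by
    have := hB.1.spectral_theorem
    rwa [hcoe, Unitary.conjStarAlgAut_apply, Matrix.star_eq_conjTranspose] at this
  have hnuc : nucNorm X = (diagonal (fun i => Real.sqrt (ev i))).trace := by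
    have h1 : nucNorm X = (V * diagonal (fun i => Real.sqrt (ev i)) * Vᴴ).trace := rfl
    rw [h1, Matrix.trace_mul_cycle, hVV, Matrix.one_mul]
  clear_value V ev
  clear hcoe hV hev hB
  -- diagonal matrices
  have hsqrtne : ∀ i, ev i ≠ 0 → Real.sqrt (ev i) ≠ 0 := fun i h =>
    ne_of_gt (Real.sqrt_pos.mpr (lt_of_le_of_ne (hev0 i) (Ne.symm h)))
  set D : Matrix (Fin n) (Fin n) ℝ := diagonal ev with hD
  set S : Matrix (Fin n) (Fin n) ℝ := diagonal (fun i => Real.sqrt (ev i)) with hS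
  set Dinv : Matrix (Fin n) (Fin n) ℝ :=
    diagonal (fun i => if ev i = 0 then 0 else (Real.sqrt (ev i))⁻¹) with hDinv
  set E : Matrix (Fin n) (Fin n) ℝ := diagonal (fun i => if ev i = 0 then (0:ℝ) else 1) with hE
  set R4 : Matrix (Fin n) (Fin n) ℝ :=
    diagonal (fun i => Real.sqrt (Real.sqrt (ev i))) with hR4
  have hDinvS : Dinv * S = E := by
    rw [hDinv, hS, hE, diagonal_mul_diagonal]
    refine congrArg diagonal (funext fun i => ?_)
    by_cases h : ev i = 0
    · simp [h]
    · simp [h, inv_mul_cancel₀ (hsqrtne i h)]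
  have hDinvE : Dinv * E = Dinv := by
    rw [hDinv, hE, diagonal_mul_diagonal]
    refine congrArg diagonal (funext fun i => ?_)
    by_cases h : ev i = 0 <;> simp [h]
  have hES : E * S = S := by
    rw [hE, hS, diagonal_mul_diagonal]
    refine congrArg diagonal (funext fun i => ?_)
    by_cases h : ev i = 0 <;> simp [h]
  have hSE : S * E = S := by
    rw [hE, hS, diagonal_mul_diagonal]
    refine congrArg diagonal (funext fun i => ?_)
    by_cases h : ev i = 0 <;> simp [h]
  have hDDD : Dinv * D * Dinv = E := by
    rw [hDinv, hD, hE, diagonal_mul_diagonal, diagonal_mul_diagonal]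
    refine congrArg diagonal (funext fun i => ?_)
    by_cases h : ev i = 0
    · simp [h]
    · have hm : Real.sqrt (ev i) * Real.sqrt (ev i) = ev i := Real.mul_self_sqrt (hev0 i)
      simp only [h, if_false]
      rw [← hm]
      field_simp
      rw [Real.sqrt_sq (Real.sqrt_nonneg _)]
      exact div_self (pow_ne_zero 2 (hsqrtne i h))
  have hSH : Sᴴ = S := by rw [hS, diagonal_conjTranspose]; congr 1
  have hDinvH : Dinvᴴ = Dinv := by rw [hDinv, diagonal_conjTranspose]; congr 1
  have hR4H : R4ᴴ = R4 := by rw [hR4, diagonal_conjTranspose]; congr 1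
  have hR44 : R4 * R4 = S := by
    rw [hR4, hS, diagonal_mul_diagonal]
    exact congrArg diagonal (funext fun i => Real.mul_self_sqrt (Real.sqrt_nonneg _))
  have hXVXV : (X * V)ᴴ * (X * V) = D := by
    rw [conjTranspose_mul]
    calc Vᴴ * Xᴴ * (X * V) = Vᴴ * (Xᴴ * X) * V := by simp only [Matrix.mul_assoc]
      _ = (Vᴴ * V) * D * (Vᴴ * V) := by rw [hspec]; simp only [Matrix.mul_assoc]
      _ = D := by rw [hVV, Matrix.one_mul, Matrix.mul_one]
  have hXVE : X * V * E = X * V := by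
    ext j i
    rw [hE, Matrix.mul_diagonal]
    by_cases h : ev i = 0
    · have hcol : ((X*V)ᴴ * (X*V)) i i = 0 := by
        rw [hXVXV, hD, diagonal_apply_eq, h]
      rw [aux_col_zero (X*V) i hcol j]
      simp
    · simp [h]
  clear_value D S Dinv E R4
  clear hD hS hDinv hE hR4 hsqrtne hev0
  -- the matrix U of left singular vectors
  set U : Matrix (Fin m) (Fin n) ℝ := X * V * Dinv with hU
  have hXV : U * S = X * V := by
    rw [hU, Matrix.mul_assoc, hDinvS, hXVE]
  have hX : X = U * S * Vᴴ := by
    rw [hXV, Matrix.mul_assoc, hVV', Matrix.mul_one]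
  have hUU : Uᴴ * U = E := by
    calc Uᴴ * U = Dinv * ((X*V)ᴴ * (X*V)) * Dinv := by
          rw [hU]
          simp only [conjTranspose_mul, hDinvH, Matrix.mul_assoc]
      _ = Dinv * D * Dinv := by rw [hXVXV]
      _ = E := hDDD
  have hUE : U * E = U := by rw [hU, Matrix.mul_assoc, hDinvE]
  clear_value U
  clear hU hspec hXVXV hXVE hDinvS hDinvE hDDD hDinvH
  have hXt : Xᵀ = Xᴴ := (conjTranspose_eq_transpose_of_trivial X).symm
  have hUXV : Uᴴ * X * V = S := by
    calc Uᴴ * X * V = Uᴴ * (X * V) := Matrix.mul_assoc _ _ _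
      _ = Uᴴ * (U * S) := by rw [hXV]
      _ = (Uᴴ * U) * S := (Matrix.mul_assoc _ _ _).symm
      _ = S := by rw [hUU, hES]
  have hVXU : Vᴴ * Xᵀ * U = S := by
    rw [hXt]
    conv_lhs => rw [hX]
    simp only [conjTranspose_mul, conjTranspose_conjTranspose, hSH]
    calc Vᴴ * (V * (S * Uᴴ)) * U = (Vᴴ * V) * (S * (Uᴴ * U)) := by
          simp only [Matrix.mul_assoc]
      _ = S * E := by rw [hVV, hUU, Matrix.one_mul]
      _ = S := hSE
  have hXVS : V * S * Uᴴ = Xᵀ := by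
    rw [hXt]
    conv_rhs => rw [hX]
    simp only [conjTranspose_mul, conjTranspose_conjTranspose, hSH, Matrix.mul_assoc]
  constructor
  · -- the bound
    intro W₁ W₂ _ _ hPSD
    have hW₁psd : W₁.PosSemidef := by
      have h11 : (fromBlocks W₁ X Xᵀ W₂).submatrix Sum.inl Sum.inl = W₁ := by
        ext i j; simp
      have := hPSD.submatrix (Sum.inl : Fin m → Fin m ⊕ Fin n)
      rwa [h11] at this
    have hNpsd := hPSD.conjTranspose_mul_mul_same (fromRows U (-V))
    have hMH : (fromRows U (-V))ᴴ = fromCols Uᴴ (-Vᴴ) := by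
      rw [conjTranspose_fromRows_eq_fromCols_conjTranspose, conjTranspose_neg]
    have hNeq : (fromRows U (-V))ᴴ * fromBlocks W₁ X Xᵀ W₂ * fromRows U (-V)
        = (Uᴴ*W₁ + (-Vᴴ)*Xᵀ)*U + (Uᴴ*X + (-Vᴴ)*W₂)*(-V) := by
      rw [hMH, fromCols_mul_fromBlocks, fromCols_mul_fromRows]
    have h0 : 0 ≤ ((Uᴴ*W₁ + (-Vᴴ)*Xᵀ)*U + (Uᴴ*X + (-Vᴴ)*W₂)*(-V)).trace := by
      rw [← hNeq]; exact aux_trace_nonneg hNpsd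
    simp only [Matrix.add_mul, Matrix.neg_mul, Matrix.mul_neg, neg_neg,
      Matrix.trace_add, Matrix.trace_neg] at h0
    rw [hUXV, hVXU] at h0
    have hW₂tr : (Vᴴ * W₂ * V).trace = W₂.trace := by
      rw [Matrix.trace_mul_cycle, hVV', Matrix.one_mul]
    rw [hW₂tr] at h0
    -- trace (Uᴴ W₁ U) ≤ trace W₁
    have hP2 : (U * Uᴴ) * (U * Uᴴ) = U * Uᴴ := by
      calc (U * Uᴴ) * (U * Uᴴ) = U * ((Uᴴ * U) * Uᴴ) := by simp only [Matrix.mul_assoc]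
        _ = (U * E) * Uᴴ := by rw [hUU, Matrix.mul_assoc]
        _ = U * Uᴴ := by rw [hUE]
    have hUWU : (Uᴴ * W₁ * U).trace ≤ W₁.trace := by
      have hPH : (U * Uᴴ)ᴴ = U * Uᴴ := by
        simp only [conjTranspose_mul, conjTranspose_conjTranspose]
      have hQH : (1 - U * Uᴴ)ᴴ = 1 - U * Uᴴ := by
        rw [conjTranspose_sub, conjTranspose_one, hPH]
      have hQQ : (1 - U * Uᴴ) * (1 - U * Uᴴ) = 1 - U * Uᴴ := by
        have expand : (1 - U * Uᴴ) * (1 - U * Uᴴ)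
            = 1 - U * Uᴴ - U * Uᴴ + (U * Uᴴ) * (U * Uᴴ) := by noncomm_ring
        rw [expand, hP2]
        abel
      have hQpsd := hW₁psd.mul_mul_conjTranspose_same (1 - U * Uᴴ)
      have htr0 : 0 ≤ ((1 - U * Uᴴ) * W₁ * (1 - U * Uᴴ)ᴴ).trace := aux_trace_nonneg hQpsd
      have htr : ((1 - U * Uᴴ) * W₁ * (1 - U * Uᴴ)ᴴ).trace
          = W₁.trace - (Uᴴ * W₁ * U).trace := by
        rw [hQH, Matrix.trace_mul_cycle, hQQ, Matrix.trace_mul_comm,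
          Matrix.mul_sub, Matrix.mul_one, Matrix.trace_sub]
        congr 1
        rw [← Matrix.mul_assoc, Matrix.trace_mul_cycle]
      linarith [htr0, htr.symm.le]
    rw [hnuc]
    linarith [h0, hUWU]
  · -- attainment
    refine ⟨U * S * Uᴴ, V * S * Vᴴ, ?_, ?_, ?_, ?_⟩
    · rw [Matrix.IsSymm, ← conjTranspose_eq_transpose_of_trivial]
      simp only [conjTranspose_mul, conjTranspose_conjTranspose, hSH, Matrix.mul_assoc]
    · rw [Matrix.IsSymm, ← conjTranspose_eq_transpose_of_trivial]
      simp only [conjTranspose_mul, conjTranspose_conjTranspose, hSH, Matrix.mul_assoc]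
    · have key : fromBlocks (U*S*Uᴴ) X Xᵀ (V*S*Vᴴ)
          = (fromRows U V * R4) * (fromRows U V * R4)ᴴ := by
        rw [conjTranspose_mul, hR4H, conjTranspose_fromRows_eq_fromCols_conjTranspose,
          fromRows_mul, Matrix.mul_fromCols, fromRows_mul_fromCols]
        have e11 : U * R4 * (R4 * Uᴴ) = U * S * Uᴴ := by
          rw [← Matrix.mul_assoc, Matrix.mul_assoc U R4 R4, hR44]
        have e12 : U * R4 * (R4 * Vᴴ) = U * S * Vᴴ := by
          rw [← Matrix.mul_assoc, Matrix.mul_assoc U R4 R4, hR44]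
        have e21 : V * R4 * (R4 * Uᴴ) = V * S * Uᴴ := by
          rw [← Matrix.mul_assoc, Matrix.mul_assoc V R4 R4, hR44]
        have e22 : V * R4 * (R4 * Vᴴ) = V * S * Vᴴ := by
          rw [← Matrix.mul_assoc, Matrix.mul_assoc V R4 R4, hR44]
        rw [e11, e12, e21, e22, ← hX, hXVS]
      rw [key]
      exact posSemidef_self_mul_conjTranspose _
    · have t1 : (U * S * Uᴴ).trace = S.trace := by
        rw [Matrix.trace_mul_cycle, hUU, hES]
      have t2 : (V * S * Vᴴ).trace = S.trace := by
        rw [Matrix.trace_mul_cycle, hVV, Matrix.one_mul]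
      rw [t1, t2, hnuc]
      ring
end

section
/- Let 𝒜 : ℝ^{m×n} → ℝ^p be a linear map, let r ≥ 1 be an integer, and let X₀ ∈ ℝ^{m×n} with rank(X₀) ≤ r and b = 𝒜(X₀). Suppose there is a constant δ with 0 ≤ δ < 1 such that (1−δ)‖X‖_F ≤ ‖𝒜(X)‖ ≤ (1+δ)‖X‖_F for all matrices X ∈ ℝ^{m×n} of rank at most 2r. Then X₀ is the only matrix of rank at most r satisfying 𝒜(X) = b. -/
open Matrix

/-- The Frobenius norm of a real matrix. -/
noncomputable def frobNorm {m n : Type*} [Fintype m] [Fintype n] (X : Matrix m n ℝ) : ℝ :=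
  Real.sqrt (∑ i, ∑ j, X i j ^ 2)

lemma rank_sub_le_aux {m n : ℕ} (A B : Matrix (Fin m) (Fin n) ℝ) :
    (A - B).rank ≤ A.rank + B.rank := by
  have hsub : (A - B).mulVecLin = A.mulVecLin - B.mulVecLin := by
    ext v i
    simp [Matrix.sub_mulVec]
  have hrange : LinearMap.range (A - B).mulVecLin ≤
      LinearMap.range A.mulVecLin ⊔ LinearMap.range B.mulVecLin := by
    rintro x ⟨v, rfl⟩
    rw [hsub]
    exact Submodule.add_mem_sup ⟨v, rfl⟩ (Submodule.neg_mem _ ⟨v, rfl⟩)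
  calc (A - B).rank ≤ Module.finrank ℝ
        (LinearMap.range A.mulVecLin ⊔ LinearMap.range B.mulVecLin : Submodule ℝ _) :=
        Submodule.finrank_mono hrange
    _ ≤ A.rank + B.rank := by
        have := Submodule.finrank_add_le_finrank_add_finrank
          (LinearMap.range A.mulVecLin) (LinearMap.range B.mulVecLin)
        rw [Matrix.rank, Matrix.rank]
        omega

/-- If the restricted isometry property holds at rank 2r with constant δ < 1, then X₀ is
the unique matrix of rank at most r satisfying 𝒜(X) = b. -/
theorem unique_low_rank_solution_of_rip (m n p r : ℕ) (hr : 1 ≤ r)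
    (𝒜 : Matrix (Fin m) (Fin n) ℝ →ₗ[ℝ] EuclideanSpace ℝ (Fin p))
    (X₀ : Matrix (Fin m) (Fin n) ℝ) (hX₀ : X₀.rank ≤ r)
    (b : EuclideanSpace ℝ (Fin p)) (hb : 𝒜 X₀ = b)
    (δ : ℝ) (hδ0 : 0 ≤ δ) (hδ1 : δ < 1)
    (hRIP : ∀ X : Matrix (Fin m) (Fin n) ℝ, X.rank ≤ 2 * r →
      (1 - δ) * frobNorm X ≤ ‖𝒜 X‖ ∧ ‖𝒜 X‖ ≤ (1 + δ) * frobNorm X) :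
    ∀ X : Matrix (Fin m) (Fin n) ℝ, X.rank ≤ r → 𝒜 X = b → X = X₀ := by
  intro X hX h𝒜X
  have hrank : (X - X₀).rank ≤ 2 * r := by
    have := rank_sub_le_aux X X₀
    omega
  have h0 : 𝒜 (X - X₀) = 0 := by rw [map_sub, h𝒜X, hb, sub_self]
  have h := (hRIP _ hrank).1
  rw [h0, norm_zero] at h
  have hδpos : 0 < 1 - δ := by linarith
  have hfnn : 0 ≤ frobNorm (X - X₀) := Real.sqrt_nonneg _
  have hf0 : frobNorm (X - X₀) = 0 := by nlinarith
  have hsum : (∑ i, ∑ j, (X - X₀) i j ^ 2) = 0 := by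
    have hnn : 0 ≤ ∑ i, ∑ j, (X - X₀) i j ^ 2 :=
      Finset.sum_nonneg fun i _ => Finset.sum_nonneg fun j _ => sq_nonneg _
    have := Real.sqrt_eq_zero hnn |>.mp hf0
    exact this
  have : ∀ i j, (X - X₀) i j = 0 := by
    intro i j
    have h1 := (Finset.sum_eq_zero_iff_of_nonneg
      (fun i _ => Finset.sum_nonneg fun j _ => sq_nonneg ((X - X₀) i j))).mp hsum i (by simp)
    have h2 := (Finset.sum_eq_zero_iff_of_nonneg
      (fun j _ => sq_nonneg ((X - X₀) i j))).mp h1 j (by simp)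
    exact pow_eq_zero_iff (by norm_num) |>.mp h2
  have : X - X₀ = 0 := by ext i j; exact this i j
  exact sub_eq_zero.mp this
end

section
/- Let A and B be real m×n matrices. Then there exist matrices B₁, B₂ ∈ ℝ^{m×n} such that: (1) B = B₁ + B₂; (2) rank(B₁) ≤ 2·rank(A); (3) A·B₂' = 0 and A'·B₂ = 0; and (4) ⟨B₁, B₂⟩ = 0. -/
open Matrix

lemma toEuclideanLin_mul {k l o : ℕ} (M : Matrix (Fin k) (Fin l) ℝ) (N : Matrix (Fin l) (Fin o) ℝ) :
    toEuclideanLin (M * N) = (toEuclideanLin M).comp (toEuclideanLin N) := by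
  ext x
  simp [Matrix.toEuclideanLin_apply, Matrix.mulVec_mulVec]

/-- existence of an orthogonal projection matrix onto the column space of M -/
lemma exists_proj {k l : ℕ} (M : Matrix (Fin k) (Fin l) ℝ) :
    ∃ Q : Matrix (Fin k) (Fin k) ℝ,
      Qᵀ = Q ∧ Q * Q = Q ∧ Q * M = M ∧ ∃ C : Matrix (Fin l) (Fin k) ℝ, Q = M * C := by
  set f := toEuclideanLin M with hf
  set S := LinearMap.range f with hS
  set π : EuclideanSpace ℝ (Fin k) →L[ℝ] EuclideanSpace ℝ (Fin k) :=
    S.subtypeL ∘L S.orthogonalProjectionOnto with hπ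
  have hππ : ∀ y ∈ S, π y = y := by
    intro y hy
    exact Submodule.starProjection_eq_self_iff.mpr hy
  set Q : Matrix (Fin k) (Fin k) ℝ := toEuclideanLin.symm π.toLinearMap with hQ
  have hQπ : toEuclideanLin Q = π.toLinearMap := by simp [hQ]
  refine ⟨Q, ?_, ?_, ?_, ?_⟩
  · -- symmetric
    have h1 : Qᵀ = Qᴴ := by
      ext i j; simp [conjTranspose_apply]
    rw [h1]
    apply toEuclideanLin.injective
    rw [Matrix.toEuclideanLin_conjTranspose_eq_adjoint, hQπ]
    have hsym := (ContinuousLinearMap.isSelfAdjoint_iff_isSymmetric).mp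
        (isSelfAdjoint_starProjection S)
    have h2 : LinearMap.adjoint π.toLinearMap = π.toLinearMap :=
      ((LinearMap.eq_adjoint_iff _ _).mpr (fun x y => hsym x y)).symm
    rw [h2]
  · apply toEuclideanLin.injective
    rw [toEuclideanLin_mul, hQπ]
    refine LinearMap.ext fun x => ?_
    exact hππ _ (by simp [hπ, SetLike.coe_mem])
  · apply toEuclideanLin.injective
    rw [toEuclideanLin_mul, hQπ, ← hf]
    refine LinearMap.ext fun x => ?_
    exact hππ _ (LinearMap.mem_range_self f x)
  · -- each column of Q lies in range of f
    have hcol : ∀ i : Fin k, ∃ v : Fin l → ℝ, M *ᵥ v = Q *ᵥ Pi.single i 1 := by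
      intro i
      have : ((WithLp.equiv 2 _).symm (Q *ᵥ Pi.single i 1) : EuclideanSpace ℝ (Fin k)) ∈ S := by
        have : toEuclideanLin Q ((WithLp.equiv 2 _).symm (Pi.single i 1)) ∈ S := by
          rw [hQπ]; simp [hπ]
        simpa [Matrix.toEuclideanLin_apply] using this
      obtain ⟨w, hw⟩ := this
      refine ⟨(WithLp.equiv 2 _) w, ?_⟩
      have := congrArg (WithLp.equiv 2 (Fin k → ℝ)) hw
      simpa [hf, Matrix.toEuclideanLin_apply] using this
    choose c hc using hcol
    refine ⟨Matrix.of fun j i => c i j, ?_⟩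
    ext j i
    have := congrFun (hc i) j
    simp only [Matrix.mulVec, dotProduct] at this
    simp only [Matrix.mul_apply, Matrix.of_apply]
    rw [this]
    simp [Pi.single_apply, mul_ite]

lemma matrix_rank_add_le {k l : ℕ} (X Y : Matrix (Fin k) (Fin l) ℝ) :
    (X + Y).rank ≤ X.rank + Y.rank := by
  simp only [Matrix.rank]
  have h : LinearMap.range (X + Y).mulVecLin ≤
      LinearMap.range X.mulVecLin ⊔ LinearMap.range Y.mulVecLin := by
    rintro _ ⟨v, rfl⟩
    rw [Matrix.mulVecLin_add]
    exact Submodule.add_mem_sup (LinearMap.mem_range_self _ v) (LinearMap.mem_range_self _ v)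
  calc Module.finrank ℝ (LinearMap.range (X + Y).mulVecLin)
      ≤ Module.finrank ℝ (LinearMap.range X.mulVecLin ⊔ LinearMap.range Y.mulVecLin : Submodule ℝ _) :=
        Submodule.finrank_mono h
    _ ≤ _ := Submodule.finrank_add_le_finrank_add_finrank _ _

/-- Decomposition lemma: any B can be split as B = B₁ + B₂ with rank B₁ ≤ 2 rank A,
A B₂ᵀ = 0, Aᵀ B₂ = 0 and ⟨B₁, B₂⟩ = Tr(B₁ᵀ B₂) = 0. -/
theorem exists_rank_partition (m n : ℕ) (A B : Matrix (Fin m) (Fin n) ℝ) :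
    ∃ B₁ B₂ : Matrix (Fin m) (Fin n) ℝ,
      B = B₁ + B₂ ∧ B₁.rank ≤ 2 * A.rank ∧
      A * B₂ᵀ = 0 ∧ Aᵀ * B₂ = 0 ∧ (B₁ᵀ * B₂).trace = 0 := by
  obtain ⟨Q, hQt, hQQ, hQA, C, hQC⟩ := exists_proj A
  obtain ⟨P, hPt, hPP, hPA, D, hPD⟩ := exists_proj Aᵀ
  have hAP : A * P = A := by
    have := congrArg Matrix.transpose hPA
    simpa [Matrix.transpose_mul, hPt] using this
  have hAtQ : Aᵀ * Q = Aᵀ := by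
    have := congrArg Matrix.transpose hQA
    simpa [Matrix.transpose_mul, hQt] using this
  refine ⟨Q * B + (1 - Q) * B * P, (1 - Q) * B * (1 - P), ?_, ?_, ?_, ?_, ?_⟩
  · have : (1 - Q) * B * P + (1 - Q) * B * (1 - P) = (1 - Q) * B := by
      rw [Matrix.mul_sub, Matrix.mul_one]; abel
    rw [add_assoc, this, Matrix.sub_mul, Matrix.one_mul]; abel
  · calc (Q * B + (1 - Q) * B * P).rank ≤ (Q * B).rank + ((1 - Q) * B * P).rank :=
          matrix_rank_add_le _ _
      _ ≤ A.rank + A.rank := by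
          gcongr
          · rw [hQC, Matrix.mul_assoc]
            exact Matrix.rank_mul_le_left _ _
          · calc ((1 - Q) * B * P).rank ≤ P.rank := Matrix.rank_mul_le_right _ _
              _ ≤ Aᵀ.rank := by rw [hPD]; exact Matrix.rank_mul_le_left _ _
              _ = A.rank := Matrix.rank_transpose _
      _ = 2 * A.rank := (two_mul _).symm
  · have h2 : ((1 - Q) * B * (1 - P))ᵀ = (1 - P) * Bᵀ * (1 - Q) := by
      simp [Matrix.transpose_mul, Matrix.transpose_sub, hPt, hQt, Matrix.mul_assoc]
    rw [h2, ← Matrix.mul_assoc, ← Matrix.mul_assoc]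
    have : A * (1 - P) = 0 := by simp [Matrix.mul_sub, hAP]
    rw [this, Matrix.zero_mul, Matrix.zero_mul]
  · have : Aᵀ * (1 - Q) = 0 := by simp [Matrix.mul_sub, hAtQ]
    rw [← Matrix.mul_assoc, ← Matrix.mul_assoc, this, Matrix.zero_mul, Matrix.zero_mul]
  · have hT : (Q * B + (1 - Q) * B * P)ᵀ = Bᵀ * Q + P * Bᵀ * (1 - Q) := by
      simp [Matrix.transpose_mul, Matrix.transpose_sub, hPt, hQt, Matrix.mul_assoc]
    rw [hT, Matrix.add_mul]
    have hz1 : Bᵀ * Q * ((1 - Q) * B * (1 - P)) = 0 := by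
      have : Q * (1 - Q) = 0 := by simp [Matrix.mul_sub, hQQ]
      calc Bᵀ * Q * ((1 - Q) * B * (1 - P)) = Bᵀ * (Q * (1 - Q)) * (B * (1 - P)) := by
            simp only [Matrix.mul_assoc]
        _ = 0 := by rw [this]; simp
    have hz2 : P * Bᵀ * (1 - Q) * ((1 - Q) * B * (1 - P))
        = P * (Bᵀ * (1 - Q) * B) * (1 - P) := by
      have : (1 - Q) * (1 - Q) = 1 - Q := by
        rw [Matrix.sub_mul, Matrix.mul_sub, Matrix.mul_sub, hQQ]
        simp
      calc P * Bᵀ * (1 - Q) * ((1 - Q) * B * (1 - P))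
          = P * Bᵀ * ((1 - Q) * (1 - Q)) * (B * (1 - P)) := by simp only [Matrix.mul_assoc]
        _ = P * (Bᵀ * (1 - Q) * B) * (1 - P) := by rw [this]; simp only [Matrix.mul_assoc]
    rw [hz1, hz2, Matrix.trace_add]
    have : ((1 - P) * P : Matrix (Fin n) (Fin n) ℝ) = 0 := by
      simp [Matrix.sub_mul, hPP]
    rw [Matrix.trace_zero, zero_add, Matrix.trace_mul_comm, ← Matrix.mul_assoc, ← Matrix.mul_assoc,
      this, Matrix.zero_mul, Matrix.zero_mul, Matrix.trace_zero]
end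

section
/- Let 𝒜 be a random variable taking values in linear maps from ℝ^{m×n} to ℝ^p such that for every X ∈ ℝ^{m×n} and every 0 < ε < 1, ℙ(| ‖𝒜(X)‖² − ‖X‖_F² | ≥ ε‖X‖_F²) ≤ 2·exp(−(p/2)(ε²/2 − ε³/3)). Let U be a linear subspace of ℝ^{m×n} with d = dim(U) ≤ p, and let 0 < δ < 1. Then with probability at least 1 − 2·(12/δ)^d·exp(−(p/2)(δ²/8 − δ³/24)), the bounds (1−δ)‖X‖_F ≤ ‖𝒜(X)‖ ≤ (1+δ)‖X‖_F hold simultaneously for all X ∈ U. -/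
open Matrix MeasureTheory
open scoped ENNReal

section Aux

open Metric Module Finset
open scoped ENNReal

variable {F : Type*} [NormedAddCommGroup F] [NormedSpace ℝ F] [FiniteDimensional ℝ F]

lemma card_le_of_sep {r : ℝ} (hr : 0 < r) (s : Finset F) (hs : ∀ c ∈ s, ‖c‖ ≤ 1)
    (h : ∀ c ∈ s, ∀ d ∈ s, c ≠ d → r ≤ ‖c - d‖) :
    (s.card : ℝ) ≤ (1 + 2 / r) ^ finrank ℝ F := by
  borelize F
  let μ : Measure F := Measure.addHaar
  let δ : ℝ := r / 2
  have δpos : 0 < δ := by positivity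
  let ρ : ℝ := 1 + r / 2
  have ρpos : 0 < ρ := by positivity
  set A := ⋃ c ∈ s, ball (c : F) δ with hA
  have D : Set.Pairwise (s : Set F) (Function.onFun Disjoint fun c => ball (c : F) δ) := by
    rintro c hc d hd hcd
    apply ball_disjoint_ball
    rw [dist_eq_norm]
    have := h c hc d hd hcd
    simp only [δ]
    linarith
  have A_subset : A ⊆ ball (0 : F) ρ := by
    refine Set.iUnion₂_subset fun x hx => ?_
    apply ball_subset_ball'
    rw [dist_zero_right]
    have := hs x hx
    simp only [δ, ρ]
    linarith
  have I :
      (s.card : ℝ≥0∞) * ENNReal.ofReal (δ ^ finrank ℝ F) * μ (ball 0 1) ≤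
        ENNReal.ofReal (ρ ^ finrank ℝ F) * μ (ball 0 1) :=
    calc
      (s.card : ℝ≥0∞) * ENNReal.ofReal (δ ^ finrank ℝ F) * μ (ball 0 1) = μ A := by
        rw [hA, measure_biUnion_finset D fun c _ => measurableSet_ball]
        simp only [μ.addHaar_ball_of_pos _ δpos]
        simp only [Finset.sum_const, nsmul_eq_mul, mul_assoc]
      _ ≤ μ (ball (0 : F) ρ) := measure_mono A_subset
      _ = ENNReal.ofReal (ρ ^ finrank ℝ F) * μ (ball 0 1) := by
        simp only [μ.addHaar_ball_of_pos _ ρpos]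
  have J : (s.card : ℝ≥0∞) * ENNReal.ofReal (δ ^ finrank ℝ F) ≤
      ENNReal.ofReal (ρ ^ finrank ℝ F) :=
    (ENNReal.mul_le_mul_iff_left (measure_ball_pos _ _ zero_lt_one).ne' measure_ball_lt_top.ne).1 I
  have K := ENNReal.toReal_le_of_le_ofReal (pow_nonneg ρpos.le _) J
  rw [ENNReal.toReal_mul, ENNReal.toReal_natCast,
    ENNReal.toReal_ofReal (pow_nonneg δpos.le _)] at K
  have hratio : (1 + 2 / r : ℝ) = ρ / δ := by
    field_simp [ρ, δ]
    ring
  rw [hratio, div_pow, le_div_iff₀ (by positivity)]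
  exact K

lemma exists_net {r : ℝ} (hr : 0 < r) :
    ∃ Q : Finset F, (∀ q ∈ Q, ‖q‖ = 1) ∧ (∀ x : F, ‖x‖ = 1 → ∃ q ∈ Q, ‖x - q‖ ≤ r) ∧
      (Q.card : ℝ) ≤ (1 + 2 / r) ^ finrank ℝ F := by
  classical
  set S : Set ℕ := {N | ∃ s : Finset F, s.card = N ∧ (∀ c ∈ s, ‖c‖ = 1) ∧
    ∀ c ∈ s, ∀ d ∈ s, c ≠ d → r ≤ ‖c - d‖} with hS
  have hbdd : BddAbove S := by
    refine ⟨Nat.ceil ((1 + 2 / r) ^ finrank ℝ F), ?_⟩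
    rintro N ⟨s, rfl, h1, h2⟩
    have h3 := card_le_of_sep hr s (fun c hc => (h1 c hc).le) h2
    exact_mod_cast h3.trans (Nat.le_ceil _)
  have hne : S.Nonempty := ⟨0, ∅, by simp⟩
  obtain ⟨s, hcard, h1, h2⟩ := Nat.sSup_mem hne hbdd
  refine ⟨s, h1, ?_, hcard ▸ card_le_of_sep hr s (fun c hc => (h1 c hc).le) h2⟩
  intro x hx
  by_contra hcon
  push_neg at hcon
  have hxs : x ∉ s := fun hxs => by
    have := hcon x hxs
    simp only [sub_self, norm_zero] at this
    linarith
  have hmem : (insert x s).card ∈ S := by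
    refine ⟨insert x s, rfl, ?_, ?_⟩
    · intro c hc
      rcases Finset.mem_insert.1 hc with rfl | hc
      · exact hx
      · exact h1 c hc
    · intro c hc d hd hcd
      rcases Finset.mem_insert.1 hc with hceq | hc' <;>
        rcases Finset.mem_insert.1 hd with hdeq | hd'
      · exact absurd (hceq.trans hdeq.symm) hcd
      · subst hceq; exact (hcon d hd').le
      · subst hdeq; rw [norm_sub_rev]; exact (hcon c hc').le
      · exact h2 c hc' d hd' hcd
  have := le_csSup hbdd hmem
  rw [Finset.card_insert_of_notMem hxs, hcard] at this
  omega

end Aux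

noncomputable def matEuc (m n : ℕ) :
    Matrix (Fin m) (Fin n) ℝ ≃ₗ[ℝ] EuclideanSpace ℝ (Fin m × Fin n) where
  toFun X := (WithLp.equiv 2 _).symm fun p => X p.1 p.2
  invFun y i j := (WithLp.equiv 2 _) y (i, j)
  map_add' _ _ := rfl
  map_smul' _ _ := rfl
  left_inv _ := rfl
  right_inv _ := rfl

lemma norm_matEuc {m n : ℕ} (X : Matrix (Fin m) (Fin n) ℝ) :
    ‖matEuc m n X‖ = frobNorm X := by
  rw [EuclideanSpace.norm_eq, frobNorm]
  congr 1
  rw [Fintype.sum_prod_type]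
  apply Finset.sum_congr rfl
  intro i _
  apply Finset.sum_congr rfl
  intro j _
  simp [matEuc, Real.norm_eq_abs, sq_abs]
  rfl

lemma frobNorm_matEuc_symm {m n : ℕ} (y : EuclideanSpace ℝ (Fin m × Fin n)) :
    frobNorm ((matEuc m n).symm y) = ‖y‖ := by
  rw [← norm_matEuc, LinearEquiv.apply_symm_apply]

set_option maxHeartbeats 1000000 in
/-- Concentration on a subspace: if a random linear map 𝒜 satisfies the pointwise
concentration bound, then with probability at least
1 − 2 (12/δ)^d exp(−(p/2)(δ²/8 − δ³/24)), the near-isometry bounds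
(1−δ)‖X‖_F ≤ ‖𝒜(X)‖ ≤ (1+δ)‖X‖_F hold simultaneously for all X in a fixed
d-dimensional subspace U of matrices (d ≤ p). -/
theorem rip_on_subspace (m n p : ℕ) {Ω : Type*} [MeasurableSpace Ω]
    (ℙ : Measure Ω) [IsProbabilityMeasure ℙ]
    (𝒜 : Ω → Matrix (Fin m) (Fin n) ℝ →ₗ[ℝ] EuclideanSpace ℝ (Fin p))
    (hmeas : ∀ X : Matrix (Fin m) (Fin n) ℝ, Measurable fun ω => 𝒜 ω X)
    (hconc : ∀ (X : Matrix (Fin m) (Fin n) ℝ) (ε : ℝ), 0 < ε → ε < 1 →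
      ℙ {ω | ε * frobNorm X ^ 2 ≤ |‖𝒜 ω X‖ ^ 2 - frobNorm X ^ 2|} ≤
        ENNReal.ofReal (2 * Real.exp (-(p / 2 : ℝ) * (ε ^ 2 / 2 - ε ^ 3 / 3))))
    (U : Submodule ℝ (Matrix (Fin m) (Fin n) ℝ)) (d : ℕ)
    (hd : Module.finrank ℝ U = d) (hdp : d ≤ p)
    (δ : ℝ) (hδ0 : 0 < δ) (hδ1 : δ < 1) :
    ENNReal.ofReal
        (1 - 2 * (12 / δ) ^ d * Real.exp (-(p / 2 : ℝ) * (δ ^ 2 / 8 - δ ^ 3 / 24))) ≤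
      ℙ {ω | ∀ X ∈ U,
        (1 - δ) * frobNorm X ≤ ‖𝒜 ω X‖ ∧ ‖𝒜 ω X‖ ≤ (1 + δ) * frobNorm X} := by
  classical
  set e := matEuc m n with he
  set V : Submodule ℝ (EuclideanSpace ℝ (Fin m × Fin n)) := U.map (e : Matrix (Fin m) (Fin n) ℝ →ₗ[ℝ] EuclideanSpace ℝ (Fin m × Fin n)) with hVdef
  have hV : Module.finrank ℝ V = d := by
    rw [← hd, hVdef]
    exact LinearEquiv.finrank_map_eq e U
  -- the net
  obtain ⟨Q, hQ1, hQ2, hQ3⟩ := exists_net (F := V) (r := δ / 4) (by positivity)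
  have hQ3' : (Q.card : ℝ) ≤ (12 / δ) ^ d := by
    refine hQ3.trans ?_
    rw [hV]
    apply pow_le_pow_left₀ (by positivity)
    have h8 : (2 : ℝ) / (δ / 4) = 8 / δ := by
      field_simp
      norm_num
    rw [h8]
    have h1 : (1 + 8 / δ : ℝ) = (δ + 8) / δ := by field_simp
    rw [h1, div_le_div_iff₀ hδ0 hδ0]
    nlinarith
  -- bad events
  set Bad : V → Set Ω := fun q =>
    {ω | (δ / 2) * frobNorm (e.symm (q : EuclideanSpace ℝ (Fin m × Fin n))) ^ 2 ≤
      |‖𝒜 ω (e.symm (q : EuclideanSpace ℝ (Fin m × Fin n)))‖ ^ 2 -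
        frobNorm (e.symm (q : EuclideanSpace ℝ (Fin m × Fin n))) ^ 2|} with hBad
  have hexp : ((δ / 2) ^ 2 / 2 - (δ / 2) ^ 3 / 3 : ℝ) = δ ^ 2 / 8 - δ ^ 3 / 24 := by ring
  set c : ℝ := 2 * Real.exp (-(p / 2 : ℝ) * (δ ^ 2 / 8 - δ ^ 3 / 24)) with hc
  have hc0 : 0 ≤ c := by positivity
  have hbadq : ∀ q : V, ℙ (Bad q) ≤ ENNReal.ofReal c := by
    intro q
    have := hconc (e.symm (q : EuclideanSpace ℝ (Fin m × Fin n))) (δ / 2)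
      (by linarith) (by linarith)
    rw [hexp] at this
    exact this
  set Bd : Set Ω := ⋃ q ∈ Q, Bad q with hBd
  have hBdle : ℙ Bd ≤ ENNReal.ofReal ((12 / δ) ^ d * c) := by
    calc ℙ Bd ≤ ∑ q ∈ Q, ℙ (Bad q) := measure_biUnion_finset_le Q Bad
      _ ≤ ∑ _q ∈ Q, ENNReal.ofReal c := Finset.sum_le_sum fun q _ => hbadq q
      _ = (Q.card : ℝ≥0∞) * ENNReal.ofReal c := by
          rw [Finset.sum_const, nsmul_eq_mul]
      _ ≤ ENNReal.ofReal ((12 / δ) ^ d) * ENNReal.ofReal c := by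
          apply mul_le_mul_left
          rw [← ENNReal.ofReal_natCast]
          exact ENNReal.ofReal_le_ofReal hQ3'
      _ = ENNReal.ofReal ((12 / δ) ^ d * c) := (ENNReal.ofReal_mul (by positivity)).symm
  -- good event implies the conclusion
  have hsub : Bdᶜ ⊆ {ω | ∀ X ∈ U,
      (1 - δ) * frobNorm X ≤ ‖𝒜 ω X‖ ∧ ‖𝒜 ω X‖ ≤ (1 + δ) * frobNorm X} := by
    intro ω hω
    simp only [hBd, Set.compl_iUnion, Set.mem_iInter] at hω
    -- bounds on the net
    have hωQ : ∀ q ∈ Q, |‖𝒜 ω (e.symm (q : EuclideanSpace ℝ (Fin m × Fin n)))‖ ^ 2 - 1|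
        < δ / 2 := by
      intro q hq
      have h1 := hω q hq
      simp only [hBad, Set.mem_compl_iff, Set.mem_setOf_eq, not_le] at h1
      have hfr : frobNorm (e.symm (q : EuclideanSpace ℝ (Fin m × Fin n))) = ‖q‖ :=
        frobNorm_matEuc_symm _
      rw [hfr, hQ1 q hq] at h1
      simpa using h1
    -- the continuous linear map on V
    set T : V →L[ℝ] EuclideanSpace ℝ (Fin p) :=
      LinearMap.toContinuousLinearMap (((𝒜 ω).comp e.symm.toLinearMap).comp V.subtype) with hT
    have hTapp : ∀ q : V, T q = 𝒜 ω (e.symm (q : EuclideanSpace ℝ (Fin m × Fin n))) :=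
      fun q => rfl
    have hq_up : ∀ q ∈ Q, ‖T q‖ ≤ 1 + δ / 4 := by
      intro q hq
      have h1 := (abs_lt.1 (hωQ q hq)).2
      rw [← hTapp] at h1
      nlinarith [norm_nonneg (T q)]
    have hq_low : ∀ q ∈ Q, 1 - δ / 2 ≤ ‖T q‖ := by
      intro q hq
      have h1 := (abs_lt.1 (hωQ q hq)).1
      rw [← hTapp] at h1
      nlinarith [norm_nonneg (T q)]
    have key_up : ∀ v : V, ‖v‖ = 1 → ‖T v‖ ≤ (1 + δ / 4) + ‖T‖ * (δ / 4) := by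
      intro v hv
      obtain ⟨q, hq, hnear⟩ := hQ2 v hv
      have hsplit : T v = T q + T (v - q) := by rw [map_sub]; abel
      calc ‖T v‖ = ‖T q + T (v - q)‖ := by rw [hsplit]
        _ ≤ ‖T q‖ + ‖T (v - q)‖ := norm_add_le _ _
        _ ≤ (1 + δ / 4) + ‖T‖ * (δ / 4) := by
            refine add_le_add (hq_up q hq) ?_
            exact (T.le_opNorm _).trans
              (mul_le_mul_of_nonneg_left hnear (norm_nonneg T))
    have hTnorm : ‖T‖ ≤ 1 + δ := by
      have hb : ‖T‖ ≤ (1 + δ / 4) + ‖T‖ * (δ / 4) := by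
        refine T.opNorm_le_bound (by positivity) fun v => ?_
        by_cases hv : v = 0
        · simp [hv]
        · set u : V := ‖v‖⁻¹ • v with hu
          have hu1 : ‖u‖ = 1 := norm_smul_inv_norm hv
          have hvu : ‖v‖ • u = v := by
            rw [hu, smul_smul, _root_.mul_inv_cancel₀ (norm_ne_zero_iff.2 hv), one_smul]
          have h2 : ‖T v‖ = ‖v‖ * ‖T u‖ := by
            rw [← hvu, T.map_smul, norm_smul, norm_norm, hvu]
          rw [h2, mul_comm]
          exact mul_le_mul_of_nonneg_right (key_up u hu1) (norm_nonneg v)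
      nlinarith [norm_nonneg T]
    have hup : ∀ v : V, ‖T v‖ ≤ (1 + δ) * ‖v‖ := fun v =>
      (T.le_opNorm v).trans (mul_le_mul_of_nonneg_right hTnorm (norm_nonneg v))
    have hlow : ∀ v : V, (1 - δ) * ‖v‖ ≤ ‖T v‖ := by
      intro v
      by_cases hv : v = 0
      · simp [hv]
      · set u : V := ‖v‖⁻¹ • v with hu
        have hu1 : ‖u‖ = 1 := norm_smul_inv_norm hv
        have hvu : ‖v‖ • u = v := by
          rw [hu, smul_smul, _root_.mul_inv_cancel₀ (norm_ne_zero_iff.2 hv), one_smul]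
        have h2 : ‖T v‖ = ‖v‖ * ‖T u‖ := by
          rw [← hvu, T.map_smul, norm_smul, norm_norm, hvu]
        obtain ⟨q, hq, hnear⟩ := hQ2 u hu1
        have h3 : ‖T q‖ - ‖T u‖ ≤ ‖T q - T u‖ := norm_sub_norm_le _ _
        have h4 : ‖T q - T u‖ ≤ (1 + δ) * (δ / 4) := by
          have : T q - T u = T (q - u) := (map_sub T q u).symm
          rw [this]
          refine (hup (q - u)).trans ?_
          have : ‖q - u‖ ≤ δ / 4 := by rw [norm_sub_rev]; exact hnear
          exact mul_le_mul_of_nonneg_left this (by linarith)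
        have h5 : 1 - δ ≤ ‖T u‖ := by
          have := hq_low q hq
          nlinarith
        rw [h2]
        calc (1 - δ) * ‖v‖ ≤ ‖T u‖ * ‖v‖ :=
              mul_le_mul_of_nonneg_right h5 (norm_nonneg v)
          _ = ‖v‖ * ‖T u‖ := mul_comm _ _
    -- conclude for all X ∈ U
    intro X hX
    set v : V := ⟨e X, Submodule.mem_map_of_mem hX⟩ with hv
    have hTv : T v = 𝒜 ω X := by
      rw [hTapp v, LinearEquiv.symm_apply_apply]
    have hnv : ‖v‖ = frobNorm X := norm_matEuc X
    constructor
    · rw [← hTv, ← hnv]; exact hlow v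
    · rw [← hTv, ← hnv]; exact hup v
  -- measure bookkeeping
  have hR0 : (0 : ℝ) ≤ 2 * (12 / δ) ^ d * Real.exp (-(p / 2 : ℝ) * (δ ^ 2 / 8 - δ ^ 3 / 24)) := by
    positivity
  have hRc : (2 * (12 / δ) ^ d * Real.exp (-(p / 2 : ℝ) * (δ ^ 2 / 8 - δ ^ 3 / 24)) : ℝ)
      = (12 / δ) ^ d * c := by rw [hc]; ring
  have hsplit : ENNReal.ofReal
      (1 - 2 * (12 / δ) ^ d * Real.exp (-(p / 2 : ℝ) * (δ ^ 2 / 8 - δ ^ 3 / 24))) =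
      1 - ENNReal.ofReal (2 * (12 / δ) ^ d *
        Real.exp (-(p / 2 : ℝ) * (δ ^ 2 / 8 - δ ^ 3 / 24))) := by
    rw [ENNReal.ofReal_sub _ hR0, ENNReal.ofReal_one]
  rw [hsplit]
  have step1 : 1 - ENNReal.ofReal (2 * (12 / δ) ^ d *
      Real.exp (-(p / 2 : ℝ) * (δ ^ 2 / 8 - δ ^ 3 / 24))) ≤ 1 - ℙ Bd := by
    apply tsub_le_tsub_left
    rw [hRc]
    exact hBdle
  have step2 : (1 : ℝ≥0∞) - ℙ Bd ≤ ℙ Bdᶜ := by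
    rw [tsub_le_iff_right]
    have h1 : (1 : ℝ≥0∞) = ℙ (Set.univ : Set Ω) := (measure_univ).symm
    rw [h1, ← Set.compl_union_self Bd]
    exact measure_union_le _ _
  exact step1.trans (step2.trans (measure_mono hsub))
end

section
/- Let 𝒜 : ℝ^{m×n} → ℝ^p be a linear map (with operator norm ‖𝒜‖ induced by the Frobenius norm on ℝ^{m×n} and Euclidean norm on ℝ^p), and let U₁, U₂ be d-dimensional subspaces of ℝ^{m×n}. Suppose that for all X ∈ U₁, (1−δ)‖X‖_F ≤ ‖𝒜(X)‖ ≤ (1+δ)‖X‖_F for some constant 0 < δ < 1. Then for all Y ∈ U₂, (1−δ')‖Y‖_F ≤ ‖𝒜(Y)‖ ≤ (1+δ')‖Y‖_F, where δ' = δ + (1 + ‖𝒜‖)·‖P_{U₁} − P_{U₂}‖ and P_{U_i} denotes the orthogonal projection of ℝ^{m×n} onto U_i, with ‖P_{U₁} − P_{U₂}‖ its operator norm with respect to the Frobenius norm. -/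
/-- Robustness of near-isometry to perturbations of the subspace. Here ℝ^{m×n} with the
Frobenius norm is represented as the Euclidean space on `Fin m × Fin n` (so ‖X‖ is the
Frobenius norm), 𝒜 is a (continuous) linear map into ℝ^p with ‖𝒜‖ its induced operator
norm, and P_U denotes the orthogonal projection onto a subspace U. -/
theorem rip_perturbed_subspace (m n p d : ℕ)
    (𝒜 : EuclideanSpace ℝ (Fin m × Fin n) →L[ℝ] EuclideanSpace ℝ (Fin p))
    (U₁ U₂ : Submodule ℝ (EuclideanSpace ℝ (Fin m × Fin n)))
    (hU₁ : Module.finrank ℝ U₁ = d) (hU₂ : Module.finrank ℝ U₂ = d)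
    (δ : ℝ) (hδ0 : 0 < δ) (hδ1 : δ < 1)
    (h : ∀ X ∈ U₁, (1 - δ) * ‖X‖ ≤ ‖𝒜 X‖ ∧ ‖𝒜 X‖ ≤ (1 + δ) * ‖X‖)
    (δ' : ℝ)
    (hδ' : δ' = δ + (1 + ‖𝒜‖) *
      ‖(U₁.subtypeL.comp U₁.orthogonalProjection : EuclideanSpace ℝ (Fin m × Fin n) →L[ℝ]
          EuclideanSpace ℝ (Fin m × Fin n)) -
        U₂.subtypeL.comp U₂.orthogonalProjection‖) :
    ∀ Y ∈ U₂, (1 - δ') * ‖Y‖ ≤ ‖𝒜 Y‖ ∧ ‖𝒜 Y‖ ≤ (1 + δ') * ‖Y‖ := by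
  intro Y hY
  set P₁ : EuclideanSpace ℝ (Fin m × Fin n) →L[ℝ] EuclideanSpace ℝ (Fin m × Fin n) :=
    U₁.subtypeL.comp U₁.orthogonalProjection with hP₁def
  set P₂ : EuclideanSpace ℝ (Fin m × Fin n) →L[ℝ] EuclideanSpace ℝ (Fin m × Fin n) :=
    U₂.subtypeL.comp U₂.orthogonalProjection with hP₂def
  set ε : ℝ := ‖P₁ - P₂‖ with hεdef
  have hA0 : (0:ℝ) ≤ ‖𝒜‖ := norm_nonneg _
  have hε0 : (0:ℝ) ≤ ε := norm_nonneg _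
  set X : EuclideanSpace ℝ (Fin m × Fin n) := P₁ Y with hXdef
  have hXU : X ∈ U₁ := by
    simp [hXdef, hP₁def]
  have hP₂Y : P₂ Y = Y := by
    exact Submodule.starProjection_eq_self_iff.mpr hY
  have hdiff : ‖X - Y‖ ≤ ε * ‖Y‖ := by
    have hXY : X - Y = (P₁ - P₂) Y := by
      simp [hXdef, hP₂Y]
    rw [hXY]
    exact (P₁ - P₂).le_opNorm Y
  have hXle : ‖X‖ ≤ ‖Y‖ := by
    have h1 : ‖X‖ = ‖U₁.orthogonalProjection Y‖ := by
      simp [hXdef, hP₁def]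
    rw [h1]
    calc ‖U₁.orthogonalProjection Y‖ ≤ ‖(U₁.orthogonalProjection :
          EuclideanSpace ℝ (Fin m × Fin n) →L[ℝ] U₁)‖ * ‖Y‖ :=
        U₁.orthogonalProjection.le_opNorm Y
      _ ≤ 1 * ‖Y‖ := by
        gcongr
        exact Submodule.orthogonalProjectionOnto_norm_le U₁
      _ = ‖Y‖ := one_mul _
  have hYX : ‖Y‖ - ε * ‖Y‖ ≤ ‖X‖ := by
    have := norm_sub_norm_le Y X
    have h2 : ‖Y - X‖ ≤ ε * ‖Y‖ := by rwa [norm_sub_rev] at hdiff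
    linarith
  have h𝒜X := h X hXU
  have htri : ‖𝒜 Y - 𝒜 X‖ ≤ ‖𝒜‖ * (ε * ‖Y‖) := by
    have h3 : 𝒜 Y - 𝒜 X = 𝒜 (Y - X) := by rw [map_sub]
    rw [h3]
    calc ‖𝒜 (Y - X)‖ ≤ ‖𝒜‖ * ‖Y - X‖ := 𝒜.le_opNorm _
      _ ≤ ‖𝒜‖ * (ε * ‖Y‖) := by
        have h2 : ‖Y - X‖ ≤ ε * ‖Y‖ := by rwa [norm_sub_rev] at hdiff
        exact mul_le_mul_of_nonneg_left h2 hA0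
  have htri1 : ‖𝒜 Y‖ ≤ ‖𝒜 X‖ + ‖𝒜‖ * (ε * ‖Y‖) := by
    have := norm_sub_norm_le (𝒜 Y) (𝒜 X)
    linarith
  have htri2 : ‖𝒜 X‖ ≤ ‖𝒜 Y‖ + ‖𝒜‖ * (ε * ‖Y‖) := by
    have := norm_sub_norm_le (𝒜 X) (𝒜 Y)
    rw [norm_sub_rev] at htri
    linarith
  have hY0 : (0:ℝ) ≤ ‖Y‖ := norm_nonneg _
  constructor
  · -- lower bound
    nlinarith [h𝒜X.1, mul_nonneg hδ0.le (mul_nonneg hε0 hY0), mul_nonneg hε0 hY0]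
  · -- upper bound
    nlinarith [h𝒜X.2, mul_nonneg hδ0.le (mul_nonneg hε0 hY0), mul_nonneg hε0 hY0]
end
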